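/- arXiv:1805.08181 — 2 statements merged into one kernel-verified Lean document; each statement's English description precedes it below -/
import Mathlib

section
/- Let M be a matroid on ground set {1,…,n} with rank function rk. Then there exists a unique partition {S₁,…,S_k} of {1,…,n} such that the affine span of the rank polytope P_M equals the affine subspace {x ∈ ℝⁿ : ∑_{i∈Sⱼ} xᵢ = rk(Sⱼ) for all j = 1,…,k}. In particular, every point x ∈ P_M satisfies ∑_{i∈Sⱼ} xᵢ ∈ ℤ for every j. -/
noncomputable section

/-- The indicator vector `e_B = ∑_{i ∈ B} eᵢ` of a set `B ⊆ {1,…,n}`. -/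
def indVec {n : ℕ} (B : Set (Fin n)) : Fin n → ℝ :=
  B.indicator fun _ => (1 : ℝ)


namespace AuxRP

open Finset Relation

variable {n : ℕ}

def eVec (i : Fin n) : Fin n → ℝ := indVec {i}

lemma eVec_apply (i k : Fin n) : eVec i k = if k = i then 1 else 0 := by
  by_cases h : k = i <;> simp [eVec, indVec, Set.indicator, h]

def exch (M : Matroid (Fin n)) (i j : Fin n) : Prop :=
  ∃ B : Set (Fin n), M.IsBase B ∧ i ∈ B ∧ j ∉ B ∧ M.IsBase (insert j (B \ {i}))

def mS (M : Matroid (Fin n)) : Setoid (Fin n) := EqvGen.setoid (exch M)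

lemma indVec_sub (B : Set (Fin n)) {i j : Fin n} (hi : i ∈ B) (hj : j ∉ B) :
    indVec B - indVec (insert j (B \ {i})) = eVec i - eVec j := by
  funext k
  by_cases hki : k = i <;> by_cases hkj : k = j <;>
    simp_all [indVec, eVec_apply, Set.indicator, Pi.sub_apply]
  · by_cases hkB : k ∈ B <;> simp [hkB, hki, hkj]

lemma sum_indVec (B : Set (Fin n)) (T : Finset (Fin n)) [DecidablePred (· ∈ B)] :
    ∑ i ∈ T, indVec B i = (T.filter (· ∈ B)).card := by
  rw [Finset.card_filter]
  push_cast
  apply Finset.sum_congr rfl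
  intro i _
  by_cases h : i ∈ B <;> simp [indVec, Set.indicator, h]

end AuxRP

namespace AuxRP
open Finset Relation
variable {n : ℕ}

lemma sum_base_invariant (M : Matroid (Fin n)) {T : Finset (Fin n)}
    (hT : ∀ i j : Fin n, exch M i j → (i ∈ T ↔ j ∈ T)) :
    ∀ (k : ℕ) (B B' : Set (Fin n)), M.IsBase B → M.IsBase B' → (B \ B').ncard ≤ k →
      ∑ i ∈ T, indVec B i = ∑ i ∈ T, indVec B' i := by
  intro k
  induction k with
  | zero =>
    intro B B' hB hB' hcard
    have h0 : (B \ B').ncard = 0 := Nat.le_zero.mp hcard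
    have hfin : (B \ B').Finite := Set.toFinite _
    have : B \ B' = ∅ := by
      rwa [Set.ncard_eq_zero hfin] at h0
    have hsub : B ⊆ B' := by rwa [Set.diff_eq_empty] at this
    rw [hB.eq_of_subset_isBase hB' hsub]
  | succ k ih =>
    intro B B' hB hB' hcard
    rcases Set.eq_empty_or_nonempty (B \ B') with hempty | ⟨e, he⟩
    · have hsub : B ⊆ B' := by rwa [Set.diff_eq_empty] at hempty
      rw [hB.eq_of_subset_isBase hB' hsub]
    · obtain ⟨f, hf, hB₂⟩ := hB.exchange hB' he
      set B₂ := insert f (B \ {e}) with hB₂def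
      have hexch : exch M e f := ⟨B, hB, he.1, fun h => hf.2 h, hB₂⟩
      have heT : e ∈ T ↔ f ∈ T := hT e f hexch
      have hstep : ∑ i ∈ T, indVec B i = ∑ i ∈ T, indVec B₂ i := by
        have hdiff := indVec_sub B he.1 (fun h => hf.2 h)
        have : ∑ i ∈ T, (indVec B i - indVec B₂ i) = 0 := by
          have : ∀ i, indVec B i - indVec B₂ i = eVec e i - eVec f i := by
            intro i; rw [← Pi.sub_apply, hdiff]; rfl
          simp_rw [this]
          rw [Finset.sum_sub_distrib]
          have h1 : ∑ i ∈ T, eVec e i = if e ∈ T then 1 else 0 := by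
            simp_rw [eVec_apply]; simp [Finset.sum_ite_eq']
          have h2 : ∑ i ∈ T, eVec f i = if f ∈ T then 1 else 0 := by
            simp_rw [eVec_apply]; simp [Finset.sum_ite_eq']
          rw [h1, h2]
          by_cases h : e ∈ T <;> simp [h, heT.mp, heT.mpr] <;> simp_all
        rw [Finset.sum_sub_distrib] at this
        linarith
      rw [hstep]
      apply ih B₂ B' hB₂ hB'
      have hB₂diff : B₂ \ B' = (B \ B') \ {e} := by
        rw [hB₂def]
        ext x
        simp only [Set.mem_insert_iff, Set.mem_diff, Set.mem_singleton_iff]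
        constructor
        · rintro ⟨rfl | ⟨hxB, hxe⟩, hxB'⟩
          · exact absurd hf.1 hxB'
          · exact ⟨⟨hxB, hxB'⟩, hxe⟩
        · rintro ⟨⟨hxB, hxB'⟩, hxe⟩; exact ⟨Or.inr ⟨hxB, hxe⟩, hxB'⟩
      rw [hB₂diff]
      have : ((B \ B') \ {e}).ncard < (B \ B').ncard :=
        Set.ncard_diff_singleton_lt_of_mem he (Set.toFinite _)
      omega
end AuxRP

namespace AuxRP
open Finset Relation
variable {n : ℕ}

lemma exists_base_sum (M : Matroid (Fin n)) (hE : M.E = Set.univ)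
    (rk : Set (Fin n) → ℕ) (hrk : ∀ S I : Set (Fin n), M.IsBasis I S → I.ncard = rk S)
    (T : Finset (Fin n)) :
    ∃ B, M.IsBase B ∧ ∑ i ∈ T, indVec B i = (rk ↑T : ℝ) := by
  classical
  obtain ⟨I, hI⟩ := M.exists_isBasis ↑T (by rw [hE]; exact Set.subset_univ _)
  obtain ⟨B, hB, hIB⟩ := hI.exists_isBase
  refine ⟨B, hB, ?_⟩
  rw [sum_indVec]
  have hcoe : (↑(T.filter (· ∈ B)) : Set (Fin n)) = ↑T ∩ B := by
    ext x; simp [Finset.mem_filter]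
  have : (T.filter (· ∈ B)).card = I.ncard := by
    rw [← Set.ncard_coe_finset, hcoe, hIB, Set.inter_comm]
  rw [this, hrk ↑T I hI]

lemma part_rep {s : Setoid (Fin n)} [DecidableRel s.r] {T : Finset (Fin n)}
    (hT : T ∈ (Finpartition.ofSetoid s).parts) : ∃ a, ∀ b, b ∈ T ↔ s.r a b := by
  simp only [Finpartition.ofSetoid, Finpartition.ofSetSetoid_parts, Finset.mem_image, Finset.mem_univ, true_and] at hT
  obtain ⟨a, ha⟩ := hT
  exact ⟨a, fun b => by rw [← ha]; simp⟩

lemma pair_mem_direction (M : Matroid (Fin n)) {i j : Fin n} (h : EqvGen (exch M) i j) :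
    eVec i - eVec j ∈
      (affineSpan ℝ {x : Fin n → ℝ | ∃ B, M.IsBase B ∧ x = indVec B}).direction := by
  induction h with
  | rel i j hij =>
    obtain ⟨B, hB, hi, hj, hB₂⟩ := hij
    rw [← indVec_sub B hi hj]
    have h1 : indVec B ∈ affineSpan ℝ {x : Fin n → ℝ | ∃ B, M.IsBase B ∧ x = indVec B} :=
      mem_affineSpan ℝ ⟨B, hB, rfl⟩
    have h2 : indVec (insert j (B \ {i})) ∈
        affineSpan ℝ {x : Fin n → ℝ | ∃ B, M.IsBase B ∧ x = indVec B} :=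
      mem_affineSpan ℝ ⟨_, hB₂, rfl⟩
    have := AffineSubspace.vsub_mem_direction h1 h2
    simpa [vsub_eq_sub] using this
  | refl i => simp
  | symm i j _ ih => have := neg_mem ih; simpa [neg_sub] using this
  | trans i j k _ _ ih1 ih2 =>
    have := add_mem ih1 ih2
    simpa [sub_add_sub_cancel] using this
end AuxRP

namespace AuxRP
open Finset Relation
variable {n : ℕ}

lemma mem_span_pairs (s : Setoid (Fin n)) [DecidableRel s.r] (v : Fin n → ℝ)
    (hv : ∀ a : Fin n, ∑ i ∈ Finset.univ.filter (s.r a ·), v i = 0) :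
    v ∈ Submodule.span ℝ {w : Fin n → ℝ | ∃ i j, s.r i j ∧ w = eVec i - eVec j} := by
  classical
  set rep : Fin n → Fin n := fun i => (Quotient.mk s i).out with hrepdef
  have hrep : ∀ i, s.r i (rep i) := fun i => Setoid.symm (Quotient.mk_out i)
  have hrep_eq : ∀ i j, s.r i j → rep i = rep j := by
    intro i j hij
    simp only [hrepdef]
    rw [Quotient.sound hij]
  have key : v = ∑ i ∈ Finset.univ, v i • (eVec i - eVec (rep i)) := by
    funext k
    rw [Finset.sum_apply]
    have hterm : ∀ i, (v i • (eVec i - eVec (rep i))) k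
        = v i * eVec i k - v i * eVec (rep i) k := by
      intro i; simp [Pi.smul_apply, Pi.sub_apply, mul_sub]
    simp_rw [hterm]
    rw [Finset.sum_sub_distrib]
    have h1 : ∑ i ∈ Finset.univ, v i * eVec i k = v k := by
      simp_rw [eVec_apply]
      rw [Finset.sum_eq_single k]
      · simp
      · intro b _ hb; simp [Ne.symm hb]
      · simp
    have h2 : ∑ i ∈ Finset.univ, v i * eVec (rep i) k = 0 := by
      simp_rw [eVec_apply]
      have : ∀ i, v i * (if k = rep i then (1:ℝ) else 0)
          = if rep i = k then v i else 0 := by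
        intro i
        by_cases h : rep i = k
        · simp [h]
        · rw [if_neg h, if_neg (fun hk => h hk.symm), mul_zero]
      simp_rw [this]
      rw [← Finset.sum_filter]
      by_cases hk : ∃ i, rep i = k
      · obtain ⟨i₀, hi₀⟩ := hk
        have hkk : rep k = k := by
          have h2 : s.r i₀ k := hi₀ ▸ hrep i₀
          exact (hrep_eq k i₀ (Setoid.symm h2)).trans hi₀
        have hfil : Finset.univ.filter (fun i => rep i = k)
            = Finset.univ.filter (s.r k ·) := by
          ext i
          simp only [Finset.mem_filter, Finset.mem_univ, true_and]
          constructor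
          · intro h
            exact Setoid.symm (h ▸ hrep i)
          · intro h
            rw [hrep_eq i k (Setoid.symm h), hkk]
        rw [hfil]
        exact hv k
      · push_neg at hk
        rw [Finset.filter_false_of_mem (fun i _ => hk i), Finset.sum_empty]
    rw [h1, h2, sub_zero]
  rw [key]
  apply Submodule.sum_mem
  intro i _
  exact Submodule.smul_mem _ _ (Submodule.subset_span ⟨i, rep i, hrep i, rfl⟩)
end AuxRP

namespace AuxRP
open Finset Relation
variable {n : ℕ}

def sumSubspace (P : Finset (Finset (Fin n))) (c : Finset (Fin n) → ℝ) :
    AffineSubspace ℝ (Fin n → ℝ) where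
  carrier := {x | ∀ T ∈ P, ∑ i ∈ T, x i = c T}
  smul_vsub_vadd_mem' := by
    intro t p1 p2 p3 h1 h2 h3 T hT
    have hpt : ∀ i, (t • (p1 -ᵥ p2) +ᵥ p3) i = t * (p1 i - p2 i) + p3 i := fun i => rfl
    simp_rw [hpt]
    rw [Finset.sum_add_distrib, ← Finset.mul_sum, Finset.sum_sub_distrib,
      h1 T hT, h2 T hT, h3 T hT]
    ring

lemma mem_sumSubspace {P : Finset (Finset (Fin n))} {c : Finset (Fin n) → ℝ}
    {x : Fin n → ℝ} : x ∈ sumSubspace P c ↔ ∀ T ∈ P, ∑ i ∈ T, x i = c T := Iff.rfl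

open scoped Classical in
lemma part_eq_filter (Q : Finpartition (Finset.univ : Finset (Fin n)))
    {T : Finset (Fin n)} (hT : T ∈ Q.parts) {a : Fin n} (ha : a ∈ T) :
    T = Finset.univ.filter (fun b => ∃ U ∈ Q.parts, a ∈ U ∧ b ∈ U) := by
  ext b
  simp only [Finset.mem_filter, Finset.mem_univ, true_and]
  constructor
  · intro hb; exact ⟨T, hT, ha, hb⟩
  · rintro ⟨U, hU, haU, hbU⟩
    rwa [Q.eq_of_mem_parts hU hT haU ha] at hbU

end AuxRP

/-- The rank polytope of a matroid: the convex hull of the indicator vectors of its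
bases. -/
def rankPolytope {n : ℕ} (M : Matroid (Fin n)) : Set (Fin n → ℝ) :=
  convexHull ℝ {x | ∃ B : Set (Fin n), M.IsBase B ∧ x = indVec B}

open AuxRP Finset Relation

/-- There is a unique partition `{S₁,…,S_k}` of `{1,…,n}` such that the affine span of
`P_M` is `{x | ∑_{i∈Sⱼ} xᵢ = rk(Sⱼ) for all j}`; in particular every `x ∈ P_M` has
integral coordinate sums over each part. -/
theorem affineSpan_rankPolytope_unique_partition {n : ℕ} (M : Matroid (Fin n))
    (hE : M.E = Set.univ)
    (rk : Set (Fin n) → ℕ) (hrk : ∀ S I : Set (Fin n), M.IsBasis I S → I.ncard = rk S) :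
    (∃! Q : Finpartition (Finset.univ : Finset (Fin n)),
      (affineSpan ℝ (rankPolytope M) : Set (Fin n → ℝ)) =
        {x | ∀ T ∈ Q.parts, ∑ i ∈ T, x i = (rk ↑T : ℝ)}) ∧
    ∀ Q : Finpartition (Finset.univ : Finset (Fin n)),
      (affineSpan ℝ (rankPolytope M) : Set (Fin n → ℝ)) =
        {x | ∀ T ∈ Q.parts, ∑ i ∈ T, x i = (rk ↑T : ℝ)} →
      ∀ x ∈ rankPolytope M, ∀ T ∈ Q.parts, ∃ m : ℤ, ∑ i ∈ T, x i = (m : ℝ) := by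
  classical
  set s : Setoid (Fin n) := mS M with hs
  set Q : Finpartition (Finset.univ : Finset (Fin n)) := Finpartition.ofSetoid s with hQ
  set gen : Set (Fin n → ℝ) := {x | ∃ B : Set (Fin n), M.IsBase B ∧ x = indVec B} with hgen
  have hA : affineSpan ℝ (rankPolytope M) = affineSpan ℝ gen := affineSpan_convexHull _
  obtain ⟨B₀, hB₀⟩ := M.exists_isBase
  have sumBase : ∀ (B : Set (Fin n)), M.IsBase B → ∀ T ∈ Q.parts,
      ∑ i ∈ T, indVec B i = (rk ↑T : ℝ) := by
    intro B hB T hT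
    rw [hQ] at hT
    obtain ⟨a, ha⟩ := part_rep hT
    have hTprop : ∀ i j, exch M i j → (i ∈ T ↔ j ∈ T) := by
      intro i j hij
      have hr : s.r i j := EqvGen.rel i j hij
      rw [ha i, ha j]
      exact ⟨fun h => Setoid.trans h hr, fun h => Setoid.trans h (Setoid.symm hr)⟩
    obtain ⟨B₁, hB₁, hsum⟩ := exists_base_sum M hE rk hrk T
    rw [← hsum]
    exact sum_base_invariant M hTprop (B \ B₁).ncard B B₁ hB hB₁ le_rfl
  have hset : (affineSpan ℝ (rankPolytope M) : Set (Fin n → ℝ)) =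
      {x | ∀ T ∈ Q.parts, ∑ i ∈ T, x i = (rk ↑T : ℝ)} := by
    rw [hA]
    apply Set.Subset.antisymm
    · have hle : affineSpan ℝ gen ≤ sumSubspace Q.parts (fun T => (rk ↑T : ℝ)) := by
        rw [affineSpan_le]
        rintro x ⟨B, hB, rfl⟩
        exact fun T hT => sumBase B hB T hT
      exact fun x hx => hle hx
    · intro x hx
      set v : Fin n → ℝ := x - indVec B₀ with hv
      have hvsum : ∀ a : Fin n, ∑ i ∈ Finset.univ.filter (s.r a ·), v i = 0 := by
        intro a
        have hpart : Finset.univ.filter (s.r a ·) ∈ Q.parts := by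
          rw [hQ]
          simp only [Finpartition.ofSetoid, Finpartition.ofSetSetoid_parts, Finset.mem_image]
          exact ⟨a, Finset.mem_univ a, by ext b; simp⟩
        have h1 := hx _ hpart
        have h2 := sumBase B₀ hB₀ _ hpart
        have hvi : ∀ i, v i = x i - indVec B₀ i := fun i => rfl
        simp_rw [hvi]
        rw [Finset.sum_sub_distrib, h1, h2, sub_self]
      have hvdir : v ∈ (affineSpan ℝ gen).direction := by
        have hspan := mem_span_pairs s v hvsum
        refine Submodule.span_le.mpr ?_ hspan
        rintro w ⟨i, j, hij, rfl⟩
        exact pair_mem_direction M hij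
      have hmem := AffineSubspace.vadd_mem_of_mem_direction hvdir
        (mem_affineSpan ℝ (show indVec B₀ ∈ gen from ⟨B₀, hB₀, rfl⟩))
      have hvx : v +ᵥ indVec B₀ = x := by
        funext k
        show x k - indVec B₀ k + indVec B₀ k = x k
        ring
      rwa [hvx] at hmem
  have hx₀ : indVec B₀ ∈ (affineSpan ℝ (rankPolytope M) : Set (Fin n → ℝ)) := by
    rw [hA]; exact mem_affineSpan ℝ ⟨B₀, hB₀, rfl⟩
  have claim : ∀ (R : Finpartition (Finset.univ : Finset (Fin n))),
      (affineSpan ℝ (rankPolytope M) : Set (Fin n → ℝ)) =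
        {x | ∀ T ∈ R.parts, ∑ i ∈ T, x i = (rk ↑T : ℝ)} →
      ∀ i j : Fin n, (∃ T ∈ R.parts, i ∈ T ∧ j ∈ T) ↔
        (∀ x ∈ (affineSpan ℝ (rankPolytope M) : Set (Fin n → ℝ)),
          x + (eVec i - eVec j) ∈ (affineSpan ℝ (rankPolytope M) : Set (Fin n → ℝ))) := by
    intro R hR i j
    constructor
    · rintro ⟨T, hT, hi, hj⟩ x hx
      rw [hR] at hx ⊢
      intro U hU
      have hiU : i ∈ U ↔ U = T := ⟨fun h => R.eq_of_mem_parts hU hT h hi, fun h => h ▸ hi⟩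
      have hjU : j ∈ U ↔ U = T := ⟨fun h => R.eq_of_mem_parts hU hT h hj, fun h => h ▸ hj⟩
      have hpt : ∀ k, (x + (eVec i - eVec j)) k = x k + (eVec i k - eVec j k) :=
        fun k => rfl
      simp_rw [hpt]
      rw [Finset.sum_add_distrib, Finset.sum_sub_distrib, hx U hU]
      have h1 : ∑ k ∈ U, eVec i k = if i ∈ U then (1:ℝ) else 0 := by
        simp_rw [eVec_apply]; simp [Finset.sum_ite_eq']
      have h2 : ∑ k ∈ U, eVec j k = if j ∈ U then (1:ℝ) else 0 := by
        simp_rw [eVec_apply]; simp [Finset.sum_ite_eq']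
      rw [h1, h2]
      by_cases h : U = T <;> simp [hiU, hjU, h, hi, hj]
    · intro h
      obtain ⟨Ti, hTi, hiTi⟩ := R.exists_mem (Finset.mem_univ i)
      by_cases hij : j ∈ Ti
      · exact ⟨Ti, hTi, hiTi, hij⟩
      · exfalso
        have hmem := h _ hx₀
        have hx₀' := hx₀
        rw [hR] at hmem hx₀'
        have e1 := hmem Ti hTi
        have e2 := hx₀' Ti hTi
        have hpt : ∀ k, (indVec B₀ + (eVec i - eVec j)) k
            = indVec B₀ k + (eVec i k - eVec j k) := fun k => rfl
        simp_rw [hpt] at e1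
        rw [Finset.sum_add_distrib, Finset.sum_sub_distrib, e2] at e1
        have h1 : ∑ k ∈ Ti, eVec i k = 1 := by
          simp_rw [eVec_apply]; simp [Finset.sum_ite_eq', hiTi]
        have h2 : ∑ k ∈ Ti, eVec j k = 0 := by
          simp_rw [eVec_apply]; simp [Finset.sum_ite_eq', hij]
        rw [h1, h2] at e1
        norm_num at e1
  refine ⟨⟨Q, hset, ?_⟩, ?_⟩
  · intro R hR
    have hrel : ∀ a b : Fin n, (∃ T ∈ R.parts, a ∈ T ∧ b ∈ T) ↔
        (∃ T ∈ Q.parts, a ∈ T ∧ b ∈ T) :=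
      fun a b => (claim R hR a b).trans (claim Q hset a b).symm
    have hparts : R.parts = Q.parts := by
      ext T
      constructor
      · intro hT
        obtain ⟨a, ha⟩ := R.nonempty_of_mem_parts hT
        obtain ⟨V, hV, haV⟩ := Q.exists_mem (Finset.mem_univ a)
        have h1 := part_eq_filter R hT ha
        have h2 := part_eq_filter Q hV haV
        have hTV : T = V := by
          rw [h1, h2]
          exact Finset.filter_congr fun b _ => hrel a b
        rw [hTV]; exact hV
      · intro hT
        obtain ⟨a, ha⟩ := Q.nonempty_of_mem_parts hT
        obtain ⟨V, hV, haV⟩ := R.exists_mem (Finset.mem_univ a)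
        have h1 := part_eq_filter Q hT ha
        have h2 := part_eq_filter R hV haV
        have hTV : T = V := by
          rw [h1, h2]
          exact Finset.filter_congr fun b _ => (hrel a b).symm
        rw [hTV]; exact hV
    exact Finpartition.ext hparts
  · intro Q₁ h x hx T hT
    refine ⟨rk ↑T, ?_⟩
    have hxA : x ∈ (affineSpan ℝ (rankPolytope M) : Set (Fin n → ℝ)) :=
      subset_affineSpan ℝ _ hx
    rw [h] at hxA
    exact_mod_cast hxA T hT
end
end

section
/- Let M be a matroid of rank d on ground set {1,…,n} and let i ≠ j be elements of {1,…,n}. Let 𝔅 be the collection consisting of all bases of M together with all sets (B∖{j})∪{i} for B a base of M with j ∈ B and i ∉ B. Then 𝔅 is the collection of bases of a matroid M′ on {1,…,n}, and the convex hull of {e_B : B ∈ 𝔅} equals (P_M + ℝ_{≥0}(eᵢ − eⱼ)) ∩ Δ_{d,n}. -/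
open Pointwise

noncomputable section

/-- The standard basis vector `eᵢ` of `ℝⁿ`. -/
def eVec (n : ℕ) (i : Fin n) : Fin n → ℝ := Pi.single i 1

/-- The ray `ℝ_{≥0} v`. -/
def ray {n : ℕ} (v : Fin n → ℝ) : Set (Fin n → ℝ) :=
  {x | ∃ t : ℝ, 0 ≤ t ∧ x = t • v}

/-- The hypersimplex `Δ_{d,n}`. -/
def hypersimplex (d n : ℕ) : Set (Fin n → ℝ) :=
  {x | (∀ i, 0 ≤ x i ∧ x i ≤ 1) ∧ ∑ i, x i = d}

/-- The family consisting of the bases of `M` together with the exchanged sets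
`(B ∖ {j}) ∪ {i}` for bases `B` with `j ∈ B`, `i ∉ B`. -/
def exchangeFamily {n : ℕ} (M : Matroid (Fin n)) (i j : Fin n) : Set (Set (Fin n)) :=
  {B | M.IsBase B} ∪ {B' | ∃ B : Set (Fin n), M.IsBase B ∧ j ∈ B ∧ i ∉ B ∧
    B' = (B \ {j}) ∪ {i}}

open Set

variable {n d : ℕ} {M : Matroid (Fin n)} {i j : Fin n}

/-- auxiliary independence predicate -/
def Ind (M : Matroid (Fin n)) (i j : Fin n) (I : Set (Fin n)) : Prop :=
  M.Indep I ∨ (i ∈ I ∧ j ∉ I ∧ M.Indep (insert j (I \ {i})))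

lemma ind_subset {I J : Set (Fin n)} (hJ : Ind M i j J) (hIJ : I ⊆ J) : Ind M i j I := by
  rcases hJ with hJ | ⟨hiJ, hjJ, hJ⟩
  · exact Or.inl (hJ.subset hIJ)
  by_cases hiI : i ∈ I
  · exact Or.inr ⟨hiI, fun hjI => hjJ (hIJ hjI),
      hJ.subset (insert_subset_insert (diff_subset_diff_left hIJ))⟩
  · exact Or.inl (hJ.subset fun x hx => mem_insert_iff.mpr
      (Or.inr ⟨hIJ hx, by rintro rfl; exact hiI hx⟩))

lemma ncard_swap {I : Set (Fin n)} (hiI : i ∈ I) (hjI : j ∉ I) :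
    (insert j (I \ {i})).ncard = I.ncard := by
  rw [Set.ncard_insert_of_notMem (fun h => hjI h.1), Set.ncard_diff_singleton_add_one hiI]

lemma encard_lt_of_ncard_lt {I J : Set (Fin n)} (h : I.ncard < J.ncard) :
    I.encard < J.encard := by
  rw [← (Set.toFinite I).cast_ncard_eq, ← (Set.toFinite J).cast_ncard_eq, Nat.cast_lt]
  exact h

lemma ind_aug (hij : i ≠ j) {I J : Set (Fin n)} (hI : Ind M i j I) (hJ : Ind M i j J)
    (hlt : I.ncard < J.ncard) : ∃ e ∈ J, e ∉ I ∧ Ind M i j (insert e I) := by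
  by_cases hMI : M.Indep I
  · by_cases hMJ : M.Indep J
    · obtain ⟨e, he, hei⟩ := hMI.augment hMJ (encard_lt_of_ncard_lt hlt)
      exact ⟨e, he.1, he.2, Or.inl hei⟩
    · obtain ⟨hiJ, hjJ, hJbar⟩ := hJ.resolve_left hMJ
      have hcard : I.encard < (insert j (J \ {i})).encard := by
        apply encard_lt_of_ncard_lt; rwa [ncard_swap hiJ hjJ]
      obtain ⟨e, he, hei⟩ := hMI.augment hJbar hcard
      by_cases hej : e = j
      · -- e = j : M.Indep (insert j I), j ∉ I
        rw [hej] at he hei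
        have hjI : j ∉ I := he.2
        by_cases hiI : i ∈ I
        · -- augment I' = insert j (I \ {i}) against J̄
          have hI' : M.Indep (insert j (I \ {i})) :=
            hei.subset (insert_subset_insert diff_subset)
          have hcard' : (insert j (I \ {i})).encard < (insert j (J \ {i})).encard := by
            apply encard_lt_of_ncard_lt
            rwa [ncard_swap hiI hjI, ncard_swap hiJ hjJ]
          obtain ⟨e', he', hei'⟩ := hI'.augment hJbar hcard'
          have he'j : e' ≠ j := fun h => he'.2 (h ▸ mem_insert _ _)
          have he'J : e' ∈ J \ {i} := by
            rcases he'.1 with h | h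
            · exact absurd h he'j
            · exact h
          have he'I : e' ∉ I := fun h => he'.2 (mem_insert_iff.mpr
            (Or.inr ⟨h, he'J.2⟩))
          refine ⟨e', he'J.1, he'I, Or.inr ⟨mem_insert_of_mem _ hiI,
            fun h => (mem_insert_iff.mp h).elim (fun h' => he'j h'.symm) hjI, ?_⟩⟩
          have he'i : e' ≠ i := fun h => he'J.2 (by simp [h])
          have : insert j (insert e' I \ {i}) = insert e' (insert j (I \ {i})) := by
            rw [← Set.insert_diff_singleton_comm he'i, Set.insert_comm]
          rw [this]; exact hei'
        · -- i ∉ I : take e = i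
          refine ⟨i, hiJ, hiI, Or.inr ⟨mem_insert _ _,
            fun h => (mem_insert_iff.mp h).elim (fun h' => hij h'.symm) hjI, ?_⟩⟩
          rw [Set.insert_diff_self_of_notMem hiI]
          exact hei
      · have heJ : e ∈ J := by
          rcases he.1 with h | h
          · exact absurd h hej
          · exact h.1
        exact ⟨e, heJ, he.2, Or.inl hei⟩
  · obtain ⟨hiI, hjI, hIbar⟩ := hI.resolve_left hMI
    have hcard0 : (insert j (I \ {i})).ncard = I.ncard := ncard_swap hiI hjI
    by_cases hMJ : M.Indep J
    · obtain ⟨e, he, hei⟩ := hIbar.augment hMJ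
        (encard_lt_of_ncard_lt (by rwa [hcard0]))
      have hej : e ≠ j := fun h => he.2 (h ▸ mem_insert _ _)
      have hei' : e ≠ i := by
        intro h
        apply hMI
        apply hei.subset
        intro x hx
        rcases eq_or_ne x i with rfl | hxi
        · rw [← h]; exact mem_insert _ _
        · exact mem_insert_of_mem _ (mem_insert_of_mem _ ⟨hx, hxi⟩)
      have heI : e ∉ I := fun h => he.2 (mem_insert_of_mem _ ⟨h, hei'⟩)
      refine ⟨e, he.1, heI, Or.inr ⟨mem_insert_of_mem _ hiI,
        fun h => (mem_insert_iff.mp h).elim (fun h' => hej h'.symm) hjI, ?_⟩⟩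
      have : insert j (insert e I \ {i}) = insert e (insert j (I \ {i})) := by
        rw [← Set.insert_diff_singleton_comm hei', Set.insert_comm]
      rw [this]; exact hei
    · obtain ⟨hiJ, hjJ, hJbar⟩ := hJ.resolve_left hMJ
      have hcard : (insert j (I \ {i})).encard < (insert j (J \ {i})).encard := by
        apply encard_lt_of_ncard_lt
        rwa [ncard_swap hiI hjI, ncard_swap hiJ hjJ]
      obtain ⟨e, he, hei⟩ := hIbar.augment hJbar hcard
      have hej : e ≠ j := fun h => he.2 (h ▸ mem_insert _ _)
      have heiNe : e ≠ i := by
        rintro rfl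
        rcases he.1 with h | h
        · exact hij h
        · exact h.2 rfl
      have heJ : e ∈ J := by
        rcases he.1 with h | h
        · exact absurd h hej
        · exact h.1
      have heI : e ∉ I := fun h => he.2 (mem_insert_of_mem _ ⟨h, heiNe⟩)
      refine ⟨e, heJ, heI, Or.inr ⟨mem_insert_of_mem _ hiI,
        fun h => (mem_insert_iff.mp h).elim (fun h' => hej h'.symm) hjI, ?_⟩⟩
      have : insert j (insert e I \ {i}) = insert e (insert j (I \ {i})) := by
        rw [← Set.insert_diff_singleton_comm heiNe, Set.insert_comm]
      rw [this]; exact hei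

lemma base_iff_ncard (hrank : ∀ B, M.IsBase B → B.ncard = d) {B : Set (Fin n)} :
    M.IsBase B ↔ M.Indep B ∧ B.ncard = d := by
  constructor
  · exact fun h => ⟨h.indep, hrank B h⟩
  · rintro ⟨hI, hc⟩
    obtain ⟨B', hB', hBB'⟩ := hI.exists_isBase_superset
    have : B = B' := Set.eq_of_subset_of_ncard_le hBB' (by rw [hrank B' hB', hc])
    rwa [this]

lemma ind_ncard_le (hrank : ∀ B, M.IsBase B → B.ncard = d) {I : Set (Fin n)}
    (hI : Ind M i j I) : I.ncard ≤ d := by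
  rcases hI with hI | ⟨hiI, hjI, hI⟩
  · obtain ⟨B', hB', hBB'⟩ := hI.exists_isBase_superset
    rw [← hrank B' hB']
    exact Set.ncard_le_ncard hBB'
  · obtain ⟨B', hB', hBB'⟩ := hI.exists_isBase_superset
    rw [← ncard_swap hiI hjI, ← hrank B' hB']
    exact Set.ncard_le_ncard hBB'

lemma mem_exchangeFamily_iff (hij : i ≠ j) (hrank : ∀ B, M.IsBase B → B.ncard = d)
    {B : Set (Fin n)} :
    B ∈ exchangeFamily M i j ↔ Ind M i j B ∧ B.ncard = d := by
  constructor
  · rintro (hB | ⟨B₀, hB₀, hjB₀, hiB₀, rfl⟩)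
    · exact ⟨Or.inl hB.indep, hrank B hB⟩
    · have hiB' : i ∈ B₀ \ {j} ∪ {i} := Or.inr rfl
      have hjB' : j ∉ B₀ \ {j} ∪ {i} := by
        rintro (h | h)
        · exact h.2 rfl
        · exact hij (Set.mem_singleton_iff.mp h).symm
      have hdiff : (B₀ \ {j} ∪ {i}) \ {i} = B₀ \ {j} := by
        rw [Set.union_diff_right]
        apply Set.diff_singleton_eq_self
        exact fun h => hiB₀ h.1
      have hins : insert j ((B₀ \ {j} ∪ {i}) \ {i}) = B₀ := by
        rw [hdiff, Set.insert_diff_singleton, Set.insert_eq_of_mem hjB₀]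
      refine ⟨Or.inr ⟨hiB', hjB', by rw [hins]; exact hB₀.indep⟩, ?_⟩
      rw [Set.union_singleton, Set.ncard_insert_of_notMem (fun h => hiB₀ h.1),
        Set.ncard_diff_singleton_add_one hjB₀, hrank B₀ hB₀]
  · rintro ⟨hI | ⟨hiB, hjB, hK⟩, hc⟩
    · exact Or.inl ((base_iff_ncard hrank).mpr ⟨hI, hc⟩)
    · right
      refine ⟨insert j (B \ {i}), (base_iff_ncard hrank).mpr ⟨hK, by rw [ncard_swap hiB hjB, hc]⟩,
        mem_insert _ _, ?_, ?_⟩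
      · rintro (h | h)
        · exact hij h
        · exact h.2 rfl
      · rw [Set.insert_diff_self_of_notMem (fun h : j ∈ B \ {i} => hjB h.1),
          Set.union_singleton, Set.insert_diff_singleton, Set.insert_eq_of_mem hiB]

/-- The new matroid -/
def Mnew (M : Matroid (Fin n)) (i j : Fin n) (hij : i ≠ j) : Matroid (Fin n) :=
  (IndepMatroid.ofFinite Set.finite_univ (Ind M i j)
    (Or.inl M.empty_indep)
    (fun _ _ hJ hIJ => ind_subset hJ hIJ)
    (fun _ _ hI hJ hlt => ind_aug hij hI hJ hlt)
    (fun _ _ => Set.subset_univ _)).matroid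

lemma Mnew_E (hij : i ≠ j) : (Mnew M i j hij).E = Set.univ := rfl

lemma Mnew_indep (hij : i ≠ j) {I : Set (Fin n)} :
    (Mnew M i j hij).Indep I ↔ Ind M i j I := by
  exact Iff.rfl

lemma Mnew_base (hij : i ≠ j) (hrank : ∀ B, M.IsBase B → B.ncard = d) {B : Set (Fin n)} :
    (Mnew M i j hij).IsBase B ↔ B ∈ exchangeFamily M i j := by
  rw [Matroid.isBase_iff_maximal_indep, mem_exchangeFamily_iff hij hrank]
  constructor
  · rintro ⟨hB, hmax⟩
    rw [Mnew_indep hij] at hB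
    refine ⟨hB, ?_⟩
    rcases Nat.lt_or_ge B.ncard d with hlt | hge
    · exfalso
      obtain ⟨B₀, hB₀⟩ := M.exists_isBase
      have hB₀c : B₀.ncard = d := hrank B₀ hB₀
      obtain ⟨e, heB₀, heB, hind⟩ := ind_aug hij hB (Or.inl hB₀.indep) (by rw [hB₀c]; exact hlt)
      have := hmax ((Mnew_indep hij).mpr hind) (Set.subset_insert e B)
      exact heB (this (mem_insert _ _))
    · exact le_antisymm (ind_ncard_le hrank hB) hge
  · rintro ⟨hB, hc⟩
    refine ⟨(Mnew_indep hij).mpr hB, fun y hy hBy => ?_⟩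
    rw [Mnew_indep hij] at hy
    have : B = y := Set.eq_of_subset_of_ncard_le hBy (by rw [hc]; exact ind_ncard_le hrank hy)
    exact this.ge

/-- Existence of a minimal subset with a property. -/
lemma exists_minimal_subset (P : Set (Fin n) → Prop) :
    ∀ (k : ℕ) (X₀ : Set (Fin n)), X₀.ncard ≤ k → P X₀ →
      ∃ X ⊆ X₀, P X ∧ ∀ f ∈ X, ¬ P (X \ {f}) := by
  intro k
  induction k with
  | zero =>
    intro X₀ hc hP
    refine ⟨X₀, le_refl _, hP, fun f hf h => ?_⟩
    have := (Set.ncard_pos (Set.toFinite X₀)).mpr ⟨f, hf⟩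
    omega
  | succ k ih =>
    intro X₀ hc hP
    by_cases h : ∃ f ∈ X₀, P (X₀ \ {f})
    · obtain ⟨f, hf, hPf⟩ := h
      have hlt : (X₀ \ {f}).ncard ≤ k := by
        have := Set.ncard_diff_singleton_lt_of_mem hf (Set.toFinite X₀)
        omega
      obtain ⟨X, hX, hPX, hmin⟩ := ih (X₀ \ {f}) hlt hPf
      exact ⟨X, hX.trans diff_subset, hPX, hmin⟩
    · push_neg at h
      refine ⟨X₀, le_refl _, hP, h⟩

/-- Symmetric basis exchange. -/
lemma symm_exchange (hE : M.E = Set.univ) {B₁ B₂ : Set (Fin n)} {j' : Fin n}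
    (hB₁ : M.IsBase B₁) (hB₂ : M.IsBase B₂) (hj₁ : j' ∈ B₁) (hj₂ : j' ∉ B₂) :
    ∃ f ∈ B₂, f ∉ B₁ ∧ M.IsBase (insert f (B₁ \ {j'})) ∧ M.IsBase (insert j' (B₂ \ {f})) := by
  have hground : ∀ X : Set (Fin n), X ⊆ M.E := fun X => hE ▸ Set.subset_univ X
  have hmemE : ∀ x : Fin n, x ∈ M.E := fun x => hE ▸ Set.mem_univ x
  -- a minimal subset X of B₂ whose closure contains j'
  obtain ⟨X, hXB₂, hXP, hXmin⟩ := exists_minimal_subset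
    (fun X => X ⊆ B₂ ∧ j' ∈ M.closure X) B₂.ncard B₂ le_rfl
    ⟨le_refl _, by rw [hB₂.closure_eq]; exact hmemE _⟩
  obtain ⟨hXB₂', hjX⟩ := hXP
  have hjK : j' ∉ M.closure (B₁ \ {j'}) :=
    hB₁.indep.notMem_closure_diff_of_mem hj₁
  -- find f ∈ X outside the closure of B₁ \ {j'}
  have hexists : ∃ f ∈ X, f ∉ M.closure (B₁ \ {j'}) := by
    by_contra h
    push_neg at h
    exact hjK (M.closure_subset_closure_of_subset_closure h hjX)
  obtain ⟨f, hfX, hfK⟩ := hexists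
  have hfB₂ : f ∈ B₂ := hXB₂' hfX
  have hfj : f ≠ j' := fun h => hj₂ (h ▸ hfB₂)
  have hfB₁ : f ∉ B₁ := by
    intro h
    exact hfK (M.subset_closure (B₁ \ {j'}) (hground _) ⟨h, hfj⟩)
  -- first base
  have hind₁ : M.Indep (insert f (B₁ \ {j'})) := by
    rw [(hB₁.indep.subset diff_subset).insert_indep_iff_of_notMem (fun h => hfB₁ h.1)]
    exact ⟨hmemE _, hfK⟩
  have hbase₁ : M.IsBase (insert f (B₁ \ {j'})) := hB₁.exchange_isBase_of_indep hfB₁ hind₁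
  -- j' not in closure of B₂ \ {f}
  have hjcl : j' ∉ M.closure (B₂ \ {f}) := by
    intro h
    have hjX' : j' ∉ M.closure (X \ {f}) := fun hc =>
      hXmin f hfX ⟨diff_subset.trans hXB₂', hc⟩
    have hex : f ∈ M.closure (insert j' (X \ {f})) \ M.closure (X \ {f}) := by
      apply Matroid.closure_exchange
      constructor
      · rwa [Set.insert_diff_singleton, Set.insert_eq_of_mem hfX]
      · exact hjX'
    have hf' : f ∈ M.closure (insert j' (B₂ \ {f})) :=
      M.closure_subset_closure (insert_subset_insert (diff_subset_diff_left hXB₂')) hex.1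
    rw [Matroid.closure_insert_eq_of_mem_closure h] at hf'
    exact hB₂.indep.notMem_closure_diff_of_mem hfB₂ hf'
  have hind₂ : M.Indep (insert j' (B₂ \ {f})) := by
    rw [(hB₂.indep.subset diff_subset).insert_indep_iff_of_notMem (fun h => hj₂ h.1)]
    exact ⟨hmemE _, hjcl⟩
  exact ⟨f, hfB₂, hfB₁, hbase₁, hB₂.exchange_isBase_of_indep hj₂ hind₂⟩


section Part2

variable {n d : ℕ} {M : Matroid (Fin n)} {i j : Fin n}

lemma indVec_apply (B : Set (Fin n)) (k : Fin n) [Decidable (k ∈ B)] :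
    indVec B k = if k ∈ B then 1 else 0 := by
  rw [indVec, Set.indicator_apply]

lemma eVec_apply (k l : Fin n) : eVec n k l = if l = k then 1 else 0 := by
  rw [eVec, Pi.single_apply]

lemma indVec_swap {B : Set (Fin n)} (hij : i ≠ j) (hjB : j ∈ B) (hiB : i ∉ B) :
    indVec (B \ {j} ∪ {i}) = indVec B + (eVec n i - eVec n j) := by
  classical
  funext k
  simp only [Pi.add_apply, Pi.sub_apply, indVec_apply, eVec_apply]
  rcases eq_or_ne k i with rfl | hki
  · simp [hiB, hij, Set.mem_union]
  · rcases eq_or_ne k j with rfl | hkj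
    · simp [hjB, hki, Ne.symm hij]
    · by_cases hkB : k ∈ B <;> simp [hkB, hki, hkj, Set.mem_union, Set.mem_diff]

lemma sum_indVec (B : Set (Fin n)) : ∑ k, indVec B k = (B.ncard : ℝ) := by
  classical
  have hB : B.ncard = (Finset.univ.filter (· ∈ B)).card := by
    rw [← Set.ncard_coe_finset]
    congr 1
    ext x; simp
  rw [hB]
  simp [indVec_apply, Finset.sum_boole]

lemma indVec_mem_hypersimplex {B : Set (Fin n)} (hc : B.ncard = d) :
    indVec B ∈ hypersimplex d n := by
  classical
  refine ⟨fun k => ?_, by rw [sum_indVec, hc]⟩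
  rw [indVec_apply]
  by_cases h : k ∈ B <;> simp [h]

lemma convex_ray (v : Fin n → ℝ) : Convex ℝ (ray v) := by
  rintro x ⟨t₁, ht₁, rfl⟩ y ⟨t₂, ht₂, rfl⟩ a b ha hb hab
  exact ⟨a * t₁ + b * t₂, by positivity, by rw [add_smul, smul_smul, smul_smul]⟩

lemma convex_hypersimplex : Convex ℝ (hypersimplex d n) := by
  rintro x ⟨hx01, hxs⟩ y ⟨hy01, hys⟩ a b ha hb hab
  refine ⟨fun k => ⟨?_, ?_⟩, ?_⟩
  · exact add_nonneg (mul_nonneg ha (hx01 k).1) (mul_nonneg hb (hy01 k).1)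
  · show a * x k + b * y k ≤ 1
    calc a * x k + b * y k ≤ a * 1 + b * 1 := by
          gcongr
          exacts [(hx01 k).2, (hy01 k).2]
      _ = 1 := by rw [mul_one, mul_one, hab]
  · simp only [Pi.add_apply, Pi.smul_apply, smul_eq_mul]
    rw [Finset.sum_add_distrib, ← Finset.mul_sum, ← Finset.mul_sum, hxs, hys, ← add_mul, hab,
      one_mul]

lemma mem_convexHull_of_sum {ι : Type} [Fintype ι] (S : Set (Fin n → ℝ)) (W : ι → ℝ)
    (z : ι → Fin n → ℝ) (h0 : ∀ k, 0 ≤ W k) (h1 : ∑ k, W k = 1)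
    (hz : ∀ k, W k ≠ 0 → z k ∈ S) : ∑ k, W k • z k ∈ convexHull ℝ S := by
  classical
  set t := Finset.univ.filter (fun k => W k ≠ 0) with ht
  have h1' : ∑ k ∈ t, W k = 1 := by
    rw [ht, Finset.sum_filter_ne_zero, h1]
  have hx : ∑ k, W k • z k = ∑ k ∈ t, W k • z k := by
    rw [ht]
    rw [Finset.sum_filter_of_ne]
    intro x _ hx h
    exact hx (by rw [h, zero_smul])
  rw [hx, ← Finset.centerMass_eq_of_sum_1 _ _ h1']
  exact Finset.centerMass_mem_convexHull t (fun k _ => h0 k) (by rw [h1']; exact one_pos)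
    (fun k hk => hz k (Finset.mem_filter.mp hk).2)

lemma exists_rep {p : Fin n → ℝ} (hp : p ∈ rankPolytope M) :
    ∃ w : Finset (Fin n) → ℝ, (∀ A, 0 ≤ w A) ∧ ∑ A, w A = 1 ∧
      (∀ A, w A ≠ 0 → M.IsBase (↑A : Set (Fin n))) ∧ ∑ A, w A • indVec (↑A : Set (Fin n)) = p := by
  classical
  rw [rankPolytope, convexHull_eq] at hp
  obtain ⟨ι, t, wt, z, hw0, hw1, hz, hcm⟩ := hp
  have hch : ∀ k ∈ t, ∃ A : Finset (Fin n), M.IsBase ↑A ∧ z k = indVec ↑A := by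
    intro k hk
    obtain ⟨B, hB, hzB⟩ := hz k hk
    refine ⟨Finset.univ.filter (· ∈ B), ?_, ?_⟩
    · have : (↑(Finset.univ.filter (· ∈ B)) : Set (Fin n)) = B := by ext x; simp
      rwa [this]
    · have : (↑(Finset.univ.filter (· ∈ B)) : Set (Fin n)) = B := by ext x; simp
      rw [this]; exact hzB
  choose! g hg1 hg2 using hch
  refine ⟨fun A => ∑ k ∈ t.filter (g · = A), wt k, fun A => ?_, ?_, fun A hA => ?_, ?_⟩
  · exact Finset.sum_nonneg fun k hk => hw0 k (Finset.mem_filter.mp hk).1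
  · rw [Finset.sum_fiberwise_of_maps_to (fun k _ => Finset.mem_univ (g k)) wt, hw1]
  · obtain ⟨k, hk, hknz⟩ := Finset.exists_ne_zero_of_sum_ne_zero hA
    obtain ⟨hkt, hgk⟩ := Finset.mem_filter.mp hk
    rw [← hgk]
    exact hg1 k hkt
  · rw [← hcm, Finset.centerMass_eq_of_sum_1 _ _ hw1]
    rw [← Finset.sum_fiberwise_of_maps_to (fun k (_ : k ∈ t) => Finset.mem_univ (g k))
      (fun k => wt k • z k)]
    refine Finset.sum_congr rfl fun A _ => ?_
    rw [Finset.sum_smul]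
    refine Finset.sum_congr rfl fun k hk => ?_
    obtain ⟨hkt, hgk⟩ := Finset.mem_filter.mp hk
    rw [← hgk, ← hg2 k hkt]

end Part2


section Part2b

variable {n d : ℕ} {M : Matroid (Fin n)} {i j : Fin n}

/-- target set of vertices -/
lemma indVec_mem_family_left {A : Finset (Fin n)} (hA : M.IsBase (↑A : Set (Fin n))) :
    indVec (↑A : Set (Fin n)) ∈ {x | ∃ B ∈ exchangeFamily M i j, x = indVec B} :=
  ⟨↑A, Or.inl hA, rfl⟩

lemma key_finish (hij : i ≠ j) (w : Finset (Fin n) → ℝ) (t : ℝ)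
    (h0 : ∀ A, 0 ≤ w A) (h1 : ∑ A, w A = 1)
    (hbase : ∀ A, w A ≠ 0 → M.IsBase (↑A : Set (Fin n)))
    (ht0 : 0 ≤ t)
    (htα : t ≤ ∑ A ∈ Finset.univ.filter (fun A : Finset (Fin n) => j ∈ A ∧ i ∉ A), w A) :
    (∑ A, w A • indVec (↑A : Set (Fin n))) + t • (eVec n i - eVec n j)
      ∈ convexHull ℝ {x | ∃ B ∈ exchangeFamily M i j, x = indVec B} := by
  classical
  set α := ∑ A ∈ Finset.univ.filter (fun A : Finset (Fin n) => j ∈ A ∧ i ∉ A), w A with hα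
  have hα0 : 0 ≤ α := Finset.sum_nonneg fun A _ => h0 A
  rcases eq_or_lt_of_le hα0 with hzero | hpos
  · -- α = 0, hence t = 0
    have ht : t = 0 := le_antisymm (htα.trans hzero.ge) ht0
    rw [ht, zero_smul, add_zero]
    exact mem_convexHull_of_sum _ w _ h0 h1 fun A hA => indVec_mem_family_left (hbase A hA)
  · set r := t / α with hr
    have hr0 : 0 ≤ r := div_nonneg ht0 hα0
    have hr1 : r ≤ 1 := (div_le_one hpos).mpr htα
    set W : Finset (Fin n) × Bool → ℝ := fun p =>
      if p.2 then (if j ∈ p.1 ∧ i ∉ p.1 then r * w p.1 else 0)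
      else (if j ∈ p.1 ∧ i ∉ p.1 then (1 - r) * w p.1 else w p.1) with hW
    set z : Finset (Fin n) × Bool → (Fin n → ℝ) := fun p =>
      if p.2 then indVec ((↑p.1 : Set (Fin n)) \ {j} ∪ {i}) else indVec (↑p.1 : Set (Fin n))
      with hz
    have hW0 : ∀ p, 0 ≤ W p := by
      rintro ⟨A, b⟩
      rcases b <;> simp only [hW] <;> split_ifs <;>
        first
          | exact mul_nonneg hr0 (h0 A)
          | exact mul_nonneg (by linarith) (h0 A)
          | exact h0 A
          | exact le_refl 0
    have hWsum : ∀ A : Finset (Fin n), W (A, false) + W (A, true) = w A := by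
      intro A
      simp only [hW, Bool.false_eq_true, if_false, if_true]
      split_ifs <;> ring
    have hW1 : ∑ p, W p = 1 := by
      rw [Fintype.sum_prod_type, ← h1]
      refine Finset.sum_congr rfl fun A _ => ?_
      rw [Fintype.sum_bool, add_comm, hWsum]
    have hWz : ∀ p, W p ≠ 0 → z p ∈ {x | ∃ B ∈ exchangeFamily M i j, x = indVec B} := by
      rintro ⟨A, b⟩ hp
      rcases b
      · have hwA : w A ≠ 0 := by
          intro h; apply hp; simp only [hW, h]; split_ifs <;> ring
        exact indVec_mem_family_left (hbase A hwA)
      · have hclsA : (j ∈ A ∧ i ∉ A) ∧ w A ≠ 0 := by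
          by_cases hc : j ∈ A ∧ i ∉ A
          · refine ⟨hc, fun h => hp ?_⟩
            simp only [hW, h]
            split_ifs <;> ring
          · exact absurd (by simp only [hW, if_neg hc]; simp) hp
        refine ⟨(↑A : Set (Fin n)) \ {j} ∪ {i}, Or.inr ⟨↑A, hbase A hclsA.2,
          hclsA.1.1, by simpa using hclsA.1.2, rfl⟩, by simp [hz]⟩
    have hsum : ∑ p, W p • z p
        = (∑ A, w A • indVec (↑A : Set (Fin n))) + t • (eVec n i - eVec n j) := by
      rw [Fintype.sum_prod_type]
      have hper : ∀ A : Finset (Fin n), (∑ b, W (A, b) • z (A, b))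
          = w A • indVec (↑A : Set (Fin n)) +
            (if j ∈ A ∧ i ∉ A then (r * w A) • (eVec n i - eVec n j) else 0) := by
        intro A
        rw [Fintype.sum_bool]
        by_cases hc : j ∈ A ∧ i ∉ A
        · have hsw : indVec ((↑A : Set (Fin n)) \ {j} ∪ {i})
              = indVec (↑A : Set (Fin n)) + (eVec n i - eVec n j) :=
            indVec_swap hij hc.1 (by simpa using hc.2)
          simp only [hW, hz, if_pos hc, if_true, if_false, Bool.false_eq_true, hsw]
          module
        · simp only [hW, hz, if_neg hc, if_true, if_false, Bool.false_eq_true]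
          module
      rw [Finset.sum_congr rfl fun A _ => hper A, Finset.sum_add_distrib]
      congr 1
      rw [← Finset.sum_filter, ← Finset.sum_smul, ← Finset.mul_sum, ← hα, hr,
        div_mul_cancel₀ t (ne_of_gt hpos)]
    rw [← hsum]
    exact mem_convexHull_of_sum _ W z hW0 hW1 hWz

end Part2b


section Part2c

variable {n d : ℕ} {M : Matroid (Fin n)} {i j : Fin n}

lemma indVec_exch {B₁ B₂ : Set (Fin n)} {a f : Fin n} (ha₁ : a ∈ B₁) (ha₂ : a ∉ B₂)
    (hf₂ : f ∈ B₂) (hf₁ : f ∉ B₁) :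
    indVec (insert f (B₁ \ {a})) + indVec (insert a (B₂ \ {f}))
      = indVec B₁ + indVec B₂ := by
  classical
  have haf : a ≠ f := fun h => ha₂ (h ▸ hf₂)
  funext k
  simp only [Pi.add_apply, indVec_apply]
  rcases eq_or_ne k a with rfl | hka
  · simp [ha₁, ha₂, haf, Set.mem_insert_iff, Set.mem_diff]
  · rcases eq_or_ne k f with rfl | hkf
    · simp [hf₁, hf₂, haf.symm, Set.mem_insert_iff, Set.mem_diff]
    · by_cases h₁ : k ∈ B₁ <;> by_cases h₂ : k ∈ B₂ <;>
        simp [hka, hkf, h₁, h₂, Set.mem_insert_iff, Set.mem_diff]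

lemma sum_filter_update (P : Finset (Fin n) → Prop) [DecidablePred P]
    (w : Finset (Fin n) → ℝ) (m : ℝ) (C₁ C₂ A₁ A₂ : Finset (Fin n)) :
    ∑ A ∈ Finset.univ.filter P, (w A + (if A = C₁ then m else 0) + (if A = C₂ then m else 0)
        - (if A = A₁ then m else 0) - (if A = A₂ then m else 0))
      = (∑ A ∈ Finset.univ.filter P, w A) + (if P C₁ then m else 0) + (if P C₂ then m else 0)
        - (if P A₁ then m else 0) - (if P A₂ then m else 0) := by
  classical
  have hX : ∀ X : Finset (Fin n), ∑ A ∈ Finset.univ.filter P, (if A = X then m else 0)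
      = if P X then m else 0 := by
    intro X
    rw [Finset.sum_ite_eq' (Finset.univ.filter P) X fun _ => m]
    simp
  rw [Finset.sum_sub_distrib, Finset.sum_sub_distrib, Finset.sum_add_distrib,
    Finset.sum_add_distrib, hX, hX, hX, hX]

lemma key (hij : i ≠ j) (hE : M.E = Set.univ) (hrank : ∀ B, M.IsBase B → B.ncard = d) :
    ∀ (N : ℕ) (w : Finset (Fin n) → ℝ) (t : ℝ),
      (Finset.univ.filter (fun A : Finset (Fin n) => w A ≠ 0 ∧ i ∈ A ∧ j ∈ A)).card
        + (Finset.univ.filter (fun A : Finset (Fin n) => w A ≠ 0 ∧ i ∉ A ∧ j ∉ A)).card ≤ N →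
      (∀ A, 0 ≤ w A) → ∑ A, w A = 1 → (∀ A, w A ≠ 0 → M.IsBase (↑A : Set (Fin n))) →
      0 ≤ t →
      t ≤ ∑ A ∈ Finset.univ.filter (fun A : Finset (Fin n) => j ∈ A), w A →
      t ≤ ∑ A ∈ Finset.univ.filter (fun A : Finset (Fin n) => i ∉ A), w A →
      (∑ A, w A • indVec (↑A : Set (Fin n))) + t • (eVec n i - eVec n j)
        ∈ convexHull ℝ {x | ∃ B ∈ exchangeFamily M i j, x = indVec B} := by
  classical
  intro N
  induction N with
  | zero =>
    intro w t hcard h0 h1 hbase ht0 htj hti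
    apply key_finish hij w t h0 h1 hbase ht0
    have hempty : (Finset.univ.filter
        (fun A : Finset (Fin n) => w A ≠ 0 ∧ i ∈ A ∧ j ∈ A)) = ∅ := by
      rw [← Finset.card_eq_zero]; omega
    have hsplit := Finset.sum_filter_add_sum_filter_not
      (Finset.univ.filter (fun A : Finset (Fin n) => j ∈ A)) (fun A => i ∈ A) w
    rw [Finset.filter_filter, Finset.filter_filter] at hsplit
    have hz : ∑ A ∈ Finset.univ.filter (fun A : Finset (Fin n) => j ∈ A ∧ i ∈ A), w A = 0 := by
      apply Finset.sum_eq_zero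
      intro A hA
      rw [Finset.mem_filter] at hA
      by_contra hw
      have : A ∈ Finset.univ.filter
          (fun A : Finset (Fin n) => w A ≠ 0 ∧ i ∈ A ∧ j ∈ A) :=
        Finset.mem_filter.mpr ⟨Finset.mem_univ _, hw, hA.2.2, hA.2.1⟩
      rw [hempty] at this
      exact absurd this (Finset.notMem_empty _)
    rw [← hsplit, hz, zero_add] at htj
    exact htj
  | succ N ih =>
    intro w t hcard h0 h1 hbase ht0 htj hti
    by_cases htα : t ≤ ∑ A ∈ Finset.univ.filter
        (fun A : Finset (Fin n) => j ∈ A ∧ i ∉ A), w A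
    · exact key_finish hij w t h0 h1 hbase ht0 htα
    push_neg at htα
    -- split the j-sum
    have hsplitJ := Finset.sum_filter_add_sum_filter_not
      (Finset.univ.filter (fun A : Finset (Fin n) => j ∈ A)) (fun A => i ∈ A) w
    rw [Finset.filter_filter, Finset.filter_filter] at hsplitJ
    have hflip : Finset.univ.filter (fun A : Finset (Fin n) => j ∈ A ∧ i ∉ A)
        = Finset.univ.filter (fun A : Finset (Fin n) => i ∉ A ∧ j ∈ A) := by
      ext A; simp only [Finset.mem_filter]; tauto
    have hβ₁ : (∑ A ∈ Finset.univ.filter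
        (fun A : Finset (Fin n) => j ∈ A ∧ i ∈ A), w A) ≠ 0 := by
      intro h
      rw [← hsplitJ, h, zero_add] at htj
      exact absurd htj (not_le.mpr htα)
    obtain ⟨A₁, hA₁mem, hA₁w⟩ := Finset.exists_ne_zero_of_sum_ne_zero hβ₁
    have hA₁ : j ∈ A₁ ∧ i ∈ A₁ := (Finset.mem_filter.mp hA₁mem).2
    -- split the i-sum
    have hsplitI := Finset.sum_filter_add_sum_filter_not
      (Finset.univ.filter (fun A : Finset (Fin n) => i ∉ A)) (fun A => j ∈ A) w
    rw [Finset.filter_filter, Finset.filter_filter, ← hflip] at hsplitI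
    have hβ₂ : (∑ A ∈ Finset.univ.filter
        (fun A : Finset (Fin n) => i ∉ A ∧ j ∉ A), w A) ≠ 0 := by
      intro h
      rw [← hsplitI, h, add_zero] at hti
      exact absurd hti (not_le.mpr htα)
    obtain ⟨A₂, hA₂mem, hA₂w⟩ := Finset.exists_ne_zero_of_sum_ne_zero hβ₂
    have hA₂ : i ∉ A₂ ∧ j ∉ A₂ := (Finset.mem_filter.mp hA₂mem).2
    -- symmetric exchange
    have hB₁ : M.IsBase (↑A₁ : Set (Fin n)) := hbase A₁ hA₁w
    have hB₂ : M.IsBase (↑A₂ : Set (Fin n)) := hbase A₂ hA₂w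
    obtain ⟨f, hf₂, hf₁, hC₁base, hC₂base⟩ := symm_exchange hE hB₁ hB₂
      (by simpa using hA₁.1) (by simpa using hA₂.2)
    have hfA₂ : f ∈ A₂ := by simpa using hf₂
    have hfA₁ : f ∉ A₁ := by simpa using hf₁
    have hfi : f ≠ i := fun h => hfA₁ (h ▸ hA₁.2)
    have hfj : f ≠ j := fun h => hA₂.2 (h ▸ hfA₂)
    set C₁ : Finset (Fin n) := insert f (A₁.erase j) with hC₁
    set C₂ : Finset (Fin n) := insert j (A₂.erase f) with hC₂
    have hC₁coe : (↑C₁ : Set (Fin n)) = insert f ((↑A₁ : Set (Fin n)) \ {j}) := by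
      simp [hC₁]
    have hC₂coe : (↑C₂ : Set (Fin n)) = insert j ((↑A₂ : Set (Fin n)) \ {f}) := by
      simp [hC₂]
    rw [← hC₁coe] at hC₁base
    rw [← hC₂coe] at hC₂base
    have hiC₁ : i ∈ C₁ := Finset.mem_insert.mpr
      (Or.inr (Finset.mem_erase.mpr ⟨hij, hA₁.2⟩))
    have hjC₁ : j ∉ C₁ := by
      intro h
      rcases Finset.mem_insert.mp h with h | h
      · exact hfj h.symm
      · exact (Finset.mem_erase.mp h).1 rfl
    have hjC₂ : j ∈ C₂ := Finset.mem_insert_self _ _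
    have hiC₂ : i ∉ C₂ := by
      intro h
      rcases Finset.mem_insert.mp h with h | h
      · exact hij h
      · exact hA₂.1 (Finset.mem_erase.mp h).2
    -- distinctness
    have hne11 : A₁ ≠ C₁ := fun h => hjC₁ (h ▸ hA₁.1)
    have hne12 : A₁ ≠ C₂ := fun h => hiC₂ (h ▸ hA₁.2)
    have hne21 : A₂ ≠ C₁ := by intro h; apply hA₂.1; rw [h]; exact hiC₁
    have hne22 : A₂ ≠ C₂ := by intro h; apply hA₂.2; rw [h]; exact hjC₂
    have hneAA : A₁ ≠ A₂ := by intro h; apply hA₂.1; rw [← h]; exact hA₁.2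
    -- surgery weights
    set m : ℝ := min (w A₁) (w A₂) with hm
    have hm0 : 0 < m := lt_min ((h0 A₁).lt_of_ne (Ne.symm hA₁w))
      ((h0 A₂).lt_of_ne (Ne.symm hA₂w))
    set w' : Finset (Fin n) → ℝ := fun A => w A + (if A = C₁ then m else 0)
      + (if A = C₂ then m else 0) - (if A = A₁ then m else 0)
      - (if A = A₂ then m else 0) with hw'
    have hw'other : ∀ A, A ≠ A₁ → A ≠ A₂ → A ≠ C₁ → A ≠ C₂ → w' A = w A := by
      intro A e1 e2 e3 e4
      simp only [hw', if_neg e1, if_neg e2, if_neg e3, if_neg e4]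
      ring
    have hw'A₁ : w' A₁ = w A₁ - m := by
      simp only [hw', if_neg hne11, if_neg hne12, if_pos rfl, if_neg hneAA]
      simp
    have hw'A₂ : w' A₂ = w A₂ - m := by
      simp only [hw', if_neg hne21, if_neg hne22, if_pos rfl, if_neg (Ne.symm hneAA)]
      simp
    have hw'C₁ : w' C₁ = w C₁ + m := by
      have h1 : C₁ ≠ C₂ := by intro h; apply hiC₂; rw [← h]; exact hiC₁
      simp only [hw', if_pos rfl, if_neg h1, if_neg (Ne.symm hne11), if_neg (Ne.symm hne21)]
      simp
    have hw'C₂ : w' C₂ = w C₂ + m := by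
      have h1 : C₂ ≠ C₁ := by intro h; apply hiC₂; rw [h]; exact hiC₁
      simp only [hw', if_pos rfl, if_neg h1, if_neg (Ne.symm hne12), if_neg (Ne.symm hne22)]
      simp
    have h0' : ∀ A, 0 ≤ w' A := by
      intro A
      by_cases e1 : A = A₁
      · rw [e1, hw'A₁]; exact sub_nonneg.mpr (min_le_left _ _)
      by_cases e2 : A = A₂
      · rw [e2, hw'A₂]; exact sub_nonneg.mpr (min_le_right _ _)
      by_cases e3 : A = C₁
      · rw [e3, hw'C₁]; exact add_nonneg (h0 _) hm0.le
      by_cases e4 : A = C₂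
      · rw [e4, hw'C₂]; exact add_nonneg (h0 _) hm0.le
      rw [hw'other A e1 e2 e3 e4]; exact h0 A
    have h1' : ∑ A, w' A = 1 := by
      have hX : ∀ X : Finset (Fin n), ∑ A : Finset (Fin n), (if A = X then m else 0) = m := by
        intro X; simp
      simp only [hw']
      rw [Finset.sum_sub_distrib, Finset.sum_sub_distrib, Finset.sum_add_distrib,
        Finset.sum_add_distrib, h1, hX, hX, hX, hX]
      ring
    have hbase' : ∀ A, w' A ≠ 0 → M.IsBase (↑A : Set (Fin n)) := by
      intro A hA
      by_cases e1 : A = A₁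
      · rw [e1]; exact hB₁
      by_cases e2 : A = A₂
      · rw [e2]; exact hB₂
      by_cases e3 : A = C₁
      · rw [e3]; exact hC₁base
      by_cases e4 : A = C₂
      · rw [e4]; exact hC₂base
      rw [hw'other A e1 e2 e3 e4] at hA
      exact hbase A hA
    have hpt : ∑ A, w' A • indVec (↑A : Set (Fin n))
        = ∑ A, w A • indVec (↑A : Set (Fin n)) := by
      have hX : ∀ X : Finset (Fin n), ∑ A : Finset (Fin n),
          (if A = X then m else 0) • indVec (↑A : Set (Fin n))
            = m • indVec (↑X : Set (Fin n)) := by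
        intro X
        simp [ite_smul]
      simp only [hw', add_smul, sub_smul]
      rw [Finset.sum_sub_distrib, Finset.sum_sub_distrib, Finset.sum_add_distrib,
        Finset.sum_add_distrib, hX, hX, hX, hX]
      have hid : indVec (↑C₁ : Set (Fin n)) + indVec (↑C₂ : Set (Fin n))
          = indVec (↑A₁ : Set (Fin n)) + indVec (↑A₂ : Set (Fin n)) := by
        rw [hC₁coe, hC₂coe]
        exact indVec_exch (by simpa using hA₁.1) (by simpa using hA₂.2) hf₂ hf₁
      have hm2 : m • indVec (↑C₁ : Set (Fin n)) + m • indVec (↑C₂ : Set (Fin n))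
          = m • indVec (↑A₁ : Set (Fin n)) + m • indVec (↑A₂ : Set (Fin n)) := by
        rw [← smul_add, ← smul_add, hid]
      calc (∑ A, w A • indVec (↑A : Set (Fin n))) + m • indVec (↑C₁ : Set (Fin n))
            + m • indVec (↑C₂ : Set (Fin n)) - m • indVec (↑A₁ : Set (Fin n))
            - m • indVec (↑A₂ : Set (Fin n))
          = (∑ A, w A • indVec (↑A : Set (Fin n)))
            + ((m • indVec (↑C₁ : Set (Fin n)) + m • indVec (↑C₂ : Set (Fin n)))
              - (m • indVec (↑A₁ : Set (Fin n)) + m • indVec (↑A₂ : Set (Fin n)))) := by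
            abel
        _ = ∑ A, w A • indVec (↑A : Set (Fin n)) := by
            rw [hm2, sub_self, add_zero]
    have htj' : t ≤ ∑ A ∈ Finset.univ.filter (fun A : Finset (Fin n) => j ∈ A), w' A := by
      simp only [hw']
      rw [sum_filter_update]
      rw [if_neg hjC₁, if_pos hjC₂, if_pos hA₁.1, if_neg hA₂.2]
      linarith [htj]
    have hti' : t ≤ ∑ A ∈ Finset.univ.filter (fun A : Finset (Fin n) => i ∉ A), w' A := by
      simp only [hw']
      rw [sum_filter_update]
      rw [if_neg (not_not_intro hiC₁), if_pos hiC₂, if_neg (not_not_intro hA₁.2), if_pos hA₂.1]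
      linarith [hti]
    -- cardinality decrease
    have hsub1 : Finset.univ.filter (fun A : Finset (Fin n) => w' A ≠ 0 ∧ i ∈ A ∧ j ∈ A)
        ⊆ Finset.univ.filter (fun A : Finset (Fin n) => w A ≠ 0 ∧ i ∈ A ∧ j ∈ A) := by
      intro A hA
      rw [Finset.mem_filter] at hA ⊢
      obtain ⟨-, hwA, hiA, hjA⟩ := hA
      refine ⟨Finset.mem_univ _, ?_, hiA, hjA⟩
      by_cases e1 : A = A₁
      · rw [e1]; exact hA₁w
      by_cases e2 : A = A₂
      · rw [e2]; exact hA₂w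
      have e3 : A ≠ C₁ := fun h => hjC₁ (h ▸ hjA)
      have e4 : A ≠ C₂ := fun h => hiC₂ (h ▸ hiA)
      rwa [hw'other A e1 e2 e3 e4] at hwA
    have hsub2 : Finset.univ.filter (fun A : Finset (Fin n) => w' A ≠ 0 ∧ i ∉ A ∧ j ∉ A)
        ⊆ Finset.univ.filter (fun A : Finset (Fin n) => w A ≠ 0 ∧ i ∉ A ∧ j ∉ A) := by
      intro A hA
      rw [Finset.mem_filter] at hA ⊢
      obtain ⟨-, hwA, hiA, hjA⟩ := hA
      refine ⟨Finset.mem_univ _, ?_, hiA, hjA⟩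
      by_cases e1 : A = A₁
      · rw [e1]; exact hA₁w
      by_cases e2 : A = A₂
      · rw [e2]; exact hA₂w
      have e3 : A ≠ C₁ := by intro h; apply hiA; rw [h]; exact hiC₁
      have e4 : A ≠ C₂ := by intro h; apply hjA; rw [h]; exact hjC₂
      rwa [hw'other A e1 e2 e3 e4] at hwA
    have hcard' : (Finset.univ.filter
          (fun A : Finset (Fin n) => w' A ≠ 0 ∧ i ∈ A ∧ j ∈ A)).card
        + (Finset.univ.filter
          (fun A : Finset (Fin n) => w' A ≠ 0 ∧ i ∉ A ∧ j ∉ A)).card ≤ N := by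
      rcases le_total (w A₁) (w A₂) with hle | hle
      · have hmA : m = w A₁ := min_eq_left hle
        have hbad : A₁ ∈ Finset.univ.filter
            (fun A : Finset (Fin n) => w A ≠ 0 ∧ i ∈ A ∧ j ∈ A) :=
          Finset.mem_filter.mpr ⟨Finset.mem_univ _, hA₁w, hA₁.2, hA₁.1⟩
        have hnot : A₁ ∉ Finset.univ.filter
            (fun A : Finset (Fin n) => w' A ≠ 0 ∧ i ∈ A ∧ j ∈ A) := by
          rw [Finset.mem_filter]
          rintro ⟨-, hwA, -, -⟩
          exact hwA (by rw [hw'A₁, hmA, sub_self])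
        have hlt := Finset.card_lt_card
          ((Finset.ssubset_iff_of_subset hsub1).mpr ⟨A₁, hbad, hnot⟩)
        have hle2 := Finset.card_le_card hsub2
        omega
      · have hmA : m = w A₂ := min_eq_right hle
        have hbad : A₂ ∈ Finset.univ.filter
            (fun A : Finset (Fin n) => w A ≠ 0 ∧ i ∉ A ∧ j ∉ A) :=
          Finset.mem_filter.mpr ⟨Finset.mem_univ _, hA₂w, hA₂.1, hA₂.2⟩
        have hnot : A₂ ∉ Finset.univ.filter
            (fun A : Finset (Fin n) => w' A ≠ 0 ∧ i ∉ A ∧ j ∉ A) := by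
          rw [Finset.mem_filter]
          rintro ⟨-, hwA, -, -⟩
          exact hwA (by rw [hw'A₂, hmA, sub_self])
        have hlt := Finset.card_lt_card
          ((Finset.ssubset_iff_of_subset hsub2).mpr ⟨A₂, hbad, hnot⟩)
        have hle2 := Finset.card_le_card hsub1
        omega
    have := ih w' t hcard' h0' h1' hbase' ht0 htj' hti'
    rwa [hpt] at this

end Part2c


/-- The exchange family is the set of bases of a matroid `M′`, and the convex hull of its
indicator vectors equals `(P_M + ℝ_{≥0}(eᵢ − eⱼ)) ∩ Δ_{d,n}`. -/
theorem exchangeFamily_matroid_and_polytope {n d : ℕ} (M : Matroid (Fin n))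
    (hE : M.E = Set.univ) (hrank : ∀ B, M.IsBase B → B.ncard = d)
    (i j : Fin n) (hij : i ≠ j) :
    (∃ M' : Matroid (Fin n), M'.E = Set.univ ∧
      ∀ B : Set (Fin n), M'.IsBase B ↔ B ∈ exchangeFamily M i j) ∧
    convexHull ℝ {x | ∃ B ∈ exchangeFamily M i j, x = indVec B} =
      (rankPolytope M + ray (eVec n i - eVec n j)) ∩ hypersimplex d n := by
  classical
  refine ⟨⟨Mnew M i j hij, rfl, fun B => Mnew_base hij hrank⟩, ?_⟩
  apply Set.Subset.antisymm
  · -- ⊆ : each vertex lies in the intersection, which is convex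
    apply convexHull_min
    · rintro x ⟨B, hBfam, rfl⟩
      rcases hBfam with hB | ⟨B₀, hB₀, hjB₀, hiB₀, rfl⟩
      · constructor
        · have h₁ : indVec B ∈ rankPolytope M := subset_convexHull ℝ _ ⟨B, hB, rfl⟩
          have h₂ : (0 : Fin n → ℝ) ∈ ray (eVec n i - eVec n j) :=
            ⟨0, le_refl 0, (zero_smul ℝ _).symm⟩
          simpa using Set.add_mem_add h₁ h₂
        · exact indVec_mem_hypersimplex (hrank B hB)
      · constructor
        · have h₁ : indVec B₀ ∈ rankPolytope M := subset_convexHull ℝ _ ⟨B₀, hB₀, rfl⟩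
          have h₂ : eVec n i - eVec n j ∈ ray (eVec n i - eVec n j) :=
            ⟨1, zero_le_one, (one_smul ℝ _).symm⟩
          rw [indVec_swap hij hjB₀ hiB₀]
          exact Set.add_mem_add h₁ h₂
        · apply indVec_mem_hypersimplex
          rw [Set.union_singleton, Set.ncard_insert_of_notMem (fun h => hiB₀ h.1),
            Set.ncard_diff_singleton_add_one hjB₀, hrank B₀ hB₀]
    · exact ((convex_convexHull ℝ _).add (convex_ray _)).inter convex_hypersimplex
  · -- ⊇ : the hard direction
    rintro x ⟨hsum, hΔ⟩
    rw [Set.mem_add] at hsum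
    obtain ⟨p, hp, r, hr, hx⟩ := hsum
    obtain ⟨t, ht0, rfl⟩ := hr
    subst hx
    obtain ⟨w, hw0, hw1, hwbase, hwsum⟩ := exists_rep hp
    have hpj : p j = ∑ A ∈ Finset.univ.filter (fun A : Finset (Fin n) => j ∈ A), w A := by
      rw [← hwsum, Finset.sum_apply, Finset.sum_filter]
      refine Finset.sum_congr rfl fun A _ => ?_
      simp only [Pi.smul_apply, smul_eq_mul, indVec_apply, Finset.mem_coe]
      split_ifs <;> ring
    have hpi : p i = ∑ A ∈ Finset.univ.filter (fun A : Finset (Fin n) => i ∈ A), w A := by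
      rw [← hwsum, Finset.sum_apply, Finset.sum_filter]
      refine Finset.sum_congr rfl fun A _ => ?_
      simp only [Pi.smul_apply, smul_eq_mul, indVec_apply, Finset.mem_coe]
      split_ifs <;> ring
    have hvj : (eVec n i - eVec n j) j = -1 := by
      simp [eVec_apply, Ne.symm hij]
    have hvi : (eVec n i - eVec n j) i = 1 := by
      simp [eVec_apply, hij]
    have hxj : (0:ℝ) ≤ p j + t * (-1) := by
      have := (hΔ.1 j).1
      simpa [hvj] using this
    have hxi : p i + t * 1 ≤ 1 := by
      have := (hΔ.1 i).2
      simpa [hvi] using this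
    have htj : t ≤ ∑ A ∈ Finset.univ.filter (fun A : Finset (Fin n) => j ∈ A), w A := by
      rw [← hpj]; linarith
    have hti : t ≤ ∑ A ∈ Finset.univ.filter (fun A : Finset (Fin n) => i ∉ A), w A := by
      have hsplit := Finset.sum_filter_add_sum_filter_not
        (Finset.univ : Finset (Finset (Fin n))) (fun A => i ∈ A) w
      rw [hw1] at hsplit
      have : ∑ A ∈ Finset.univ.filter (fun A : Finset (Fin n) => i ∉ A), w A = 1 - p i := by
        rw [hpi]; linarith [hsplit]
      rw [this]; linarith
    have hkey := key hij hE hrank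
      ((Finset.univ.filter (fun A : Finset (Fin n) => w A ≠ 0 ∧ i ∈ A ∧ j ∈ A)).card
        + (Finset.univ.filter (fun A : Finset (Fin n) => w A ≠ 0 ∧ i ∉ A ∧ j ∉ A)).card)
      w t le_rfl hw0 hw1 hwbase ht0 htj hti
    rwa [hwsum] at hkey
end
end
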